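/- Let $\mu$ be a nonnegative symmetric Borel measure on $\mathbb{R}^d$ admitting a density $\frac{d\mu}{dz}(z)\ge \frac{1}{|z|^d\nu(|z|)}$ for a non-decreasing function $\nu\ge 0$ with $\nu(0^+)=0$, and satisfying $\int(|z|^2\wedge1)d\mu(z)<\infty$. Suppose $(\phi_n)_{n\in\mathbb{N}}\subset L^2(\mathbb{R}^d)$ satisfies $\sup_n \frac{1}{2}\int_{\mathbb{R}^d}\int_{|z|>1/n}(\phi_n(x+z)-\phi_n(x))^2\,d\mu(z)\,dx =: C<\infty$. Then $(\phi_n)$ is equicontinuous with respect to $L^2$-translations: $\lim_{|y|\to0}\sup_n\|\phi_n(\cdot+y)-\phi_n\|_{L^2(\mathbb{R}^d)}=0$. -/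

import Mathlib

open MeasureTheory Filter Topology Metric
open scoped ENNReal NNReal

noncomputable def Tf {d : ℕ} (φ : EuclideanSpace ℝ (Fin d) → ℝ)
    (y : EuclideanSpace ℝ (Fin d)) : ℝ≥0∞ :=
  ∫⁻ x, ENNReal.ofReal ((φ (x + y) - φ x) ^ 2)

lemma eLpNorm_sq {α : Type*} [MeasurableSpace α] (ψ : α → ℝ) (μ : Measure α) :
    eLpNorm ψ 2 μ = (∫⁻ x, ENNReal.ofReal (ψ x ^ 2) ∂μ) ^ (1/2 : ℝ) := by
  rw [eLpNorm_eq_lintegral_rpow_enorm_toReal two_ne_zero ENNReal.ofNat_ne_top]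
  have h2 : (2 : ℝ≥0∞).toReal = (2 : ℝ) := by simp
  rw [h2]
  congr 1
  refine lintegral_congr fun x => ?_
  rw [show ψ x ^ 2 = ‖ψ x‖ ^ 2 by rw [Real.norm_eq_abs, sq_abs],
    ENNReal.ofReal_pow (norm_nonneg _), ofReal_norm_eq_enorm, ← ENNReal.rpow_natCast]
  norm_num

lemma sq_eLpNorm {α : Type*} [MeasurableSpace α] (ψ : α → ℝ) (μ : Measure α) :
    (∫⁻ x, ENNReal.ofReal (ψ x ^ 2) ∂μ) = eLpNorm ψ 2 μ ^ (2 : ℝ) := by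
  rw [eLpNorm_sq, ← ENNReal.rpow_mul]
  norm_num

lemma Tf_translate {d : ℕ} {φ : EuclideanSpace ℝ (Fin d) → ℝ} (hφ : Measurable φ)
    (w z : EuclideanSpace ℝ (Fin d)) :
    (∫⁻ x, ENNReal.ofReal ((φ (x + z + w) - φ (x + z)) ^ 2)) = Tf φ w := by
  have hm : Measurable (fun u : EuclideanSpace ℝ (Fin d) =>
      ENNReal.ofReal ((φ (u + w) - φ u) ^ 2)) :=
    (((hφ.comp (measurable_add_const w)).sub hφ).pow_const 2).ennreal_ofReal
  exact (measurePreserving_add_right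
    (volume : Measure (EuclideanSpace ℝ (Fin d))) z).lintegral_comp hm

lemma Tf_triangle {d : ℕ} {φ : EuclideanSpace ℝ (Fin d) → ℝ} (hφ : Measurable φ)
    (y z : EuclideanSpace ℝ (Fin d)) :
    Tf φ y ≤ 4 * (Tf φ z + Tf φ (y - z)) := by
  set g1 : EuclideanSpace ℝ (Fin d) → ℝ := fun x => φ (x + z + (y - z)) - φ (x + z) with hg1
  set g2 : EuclideanSpace ℝ (Fin d) → ℝ := fun x => φ (x + z) - φ x with hg2
  have hsum : (fun x => φ (x + y) - φ x) = fun x => g1 x + g2 x := by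
    funext x
    have hx : x + z + (y - z) = x + y := by abel
    simp only [hg1, hg2, hx]
    ring
  have hmg1 : Measurable g1 :=
    ((hφ.comp ((measurable_add_const z).add_const (y - z))).sub
      (hφ.comp (measurable_add_const z)))
  have hmg2 : Measurable g2 := (hφ.comp (measurable_add_const z)).sub hφ
  have htri : eLpNorm (fun x => φ (x + y) - φ x) 2 volume
      ≤ eLpNorm g1 2 volume + eLpNorm g2 2 volume := by
    rw [hsum]
    exact eLpNorm_add_le hmg1.aestronglyMeasurable hmg2.aestronglyMeasurable one_le_two
  set a := eLpNorm g1 2 volume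
  set b := eLpNorm g2 2 volume
  have h1 : Tf φ y = eLpNorm (fun x => φ (x + y) - φ x) 2 volume ^ (2:ℝ) :=
    sq_eLpNorm _ _
  have hag : a ^ (2:ℝ) = Tf φ (y - z) := by
    rw [← sq_eLpNorm g1 volume]
    exact Tf_translate hφ (y - z) z
  have hbg : b ^ (2:ℝ) = Tf φ z := (sq_eLpNorm g2 volume).symm
  calc Tf φ y = eLpNorm (fun x => φ (x + y) - φ x) 2 volume ^ (2:ℝ) := h1
    _ ≤ (a + b) ^ (2:ℝ) := ENNReal.rpow_le_rpow htri (by norm_num)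
    _ ≤ (2 * (a ⊔ b)) ^ (2:ℝ) := by
        refine ENNReal.rpow_le_rpow ?_ (by norm_num)
        rw [two_mul]
        exact add_le_add le_sup_left le_sup_right
    _ = 4 * ((a ⊔ b) ^ (2:ℝ)) := by
        rw [ENNReal.mul_rpow_of_nonneg _ _ (by norm_num : (0:ℝ) ≤ 2)]
        congr 1
        rw [show (2:ℝ) = ((2:ℕ):ℝ) by norm_num, ENNReal.rpow_natCast]
        norm_num
    _ ≤ 4 * (a ^ (2:ℝ) + b ^ (2:ℝ)) := by
        gcongr
        rcases le_total a b with h | h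
        · rw [sup_eq_right.mpr h]; exact le_add_self
        · rw [sup_eq_left.mpr h]; exact le_self_add
    _ = 4 * (Tf φ z + Tf φ (y - z)) := by rw [hag, hbg, add_comm]

lemma Tf_measurable {d : ℕ} {φ : EuclideanSpace ℝ (Fin d) → ℝ} (hφ : Measurable φ) :
    Measurable (Tf φ) := by
  apply Measurable.lintegral_prod_left
  exact (((hφ.comp (measurable_fst.add measurable_snd)).sub
    (hφ.comp measurable_fst)).pow_const 2).ennreal_ofReal

lemma Tf_zero {d : ℕ} (φ : EuclideanSpace ℝ (Fin d) → ℝ) : Tf φ 0 = 0 := by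
  simp [Tf]

lemma tendsto_translate {d : ℕ} (g : EuclideanSpace ℝ (Fin d) → ℝ) (hg : MemLp g 2 volume) :
    Tendsto (fun y => eLpNorm (fun x => g (x + y) - g x) 2 volume)
      (𝓝 (0 : EuclideanSpace ℝ (Fin d))) (𝓝 0) := by
  haveI : Fact ((1:ℝ≥0∞) ≤ 2) := ⟨one_le_two⟩
  let F : Lp ℝ 2 (volume : Measure (EuclideanSpace ℝ (Fin d))) := hg.toLp g
  let Tc : C(EuclideanSpace ℝ (Fin d) × EuclideanSpace ℝ (Fin d), EuclideanSpace ℝ (Fin d)) :=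
    ⟨fun p => p.2 + p.1, by fun_prop⟩
  let T : EuclideanSpace ℝ (Fin d) → C(EuclideanSpace ℝ (Fin d), EuclideanSpace ℝ (Fin d)) :=
    fun y => Tc.curry y
  have hTcont : Continuous T := Tc.curry.continuous
  have hmp : ∀ y : EuclideanSpace ℝ (Fin d), MeasurePreserving (T y) volume volume := fun y =>
    measurePreserving_add_right volume y
  have key : Tendsto (fun y => Lp.compMeasurePreserving (T y) (hmp y) F)
      (𝓝 0) (𝓝 (Lp.compMeasurePreserving (T 0) (hmp 0) F)) :=
    Filter.Tendsto.compMeasurePreservingLp tendsto_const_nhds (hTcont.tendsto 0) hmp (hmp 0)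
      (by norm_num)
  have h0 : Lp.compMeasurePreserving (T 0) (hmp 0) F = F := by
    apply Lp.ext
    refine (Lp.coeFn_compMeasurePreserving _ _).trans ?_
    have : (⇑F) ∘ (T 0) = ⇑F := by
      funext x
      simp [T, Tc, ContinuousMap.curry]
    rw [this]
  rw [h0] at key
  have h2 := (Lp.tendsto_Lp_iff_tendsto_eLpNorm' _ F).mp key
  refine h2.congr fun y => ?_
  refine eLpNorm_congr_ae ?_
  have hF : (⇑F : EuclideanSpace ℝ (Fin d) → ℝ) =ᵐ[volume] g := hg.coeFn_toLp
  have hc : ⇑(Lp.compMeasurePreserving (T y) (hmp y) F) =ᵐ[volume] (⇑F) ∘ (T y) :=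
    Lp.coeFn_compMeasurePreserving _ _
  have hcomp : ((⇑F) ∘ (T y) : EuclideanSpace ℝ (Fin d) → ℝ) =ᵐ[volume] fun x => g (x + y) :=
    (hmp y).quasiMeasurePreserving.ae_eq hF
  filter_upwards [hc, hcomp, hF] with x h1 h2 h3
  simp only [Pi.sub_apply, h1]
  rw [h2, h3]

lemma annulus_bound {d : ℕ} {f : EuclideanSpace ℝ (Fin d) → ℝ≥0∞} (hf : Measurable f)
    {ν : ℝ → ℝ} (hν0 : ∀ r, 0 ≤ ν r) (hνmono : MonotoneOn ν (Set.Ici 0))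
    (hlow : ∀ z : EuclideanSpace ℝ (Fin d), z ≠ 0 →
        1 ≤ f z * ENNReal.ofReal (‖z‖ ^ d * ν ‖z‖))
    {φ : EuclideanSpace ℝ (Fin d) → ℝ} (hφ : Measurable φ)
    {C : ℝ≥0∞} {c : ℝ}
    (hen : ∫⁻ z in {z : EuclideanSpace ℝ (Fin d) | c < ‖z‖}, f z * Tf φ z ∂volume ≤ 2 * C)
    {y : EuclideanSpace ℝ (Fin d)} (hy : y ≠ 0) (hc : c ≤ ‖y‖ / 4) :
    Tf φ y ≤ (16 * ENNReal.ofReal ((3:ℝ) ^ d) * C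
        / volume (ball (0 : EuclideanSpace ℝ (Fin d)) 1)) * ENNReal.ofReal (ν (3 * ‖y‖ / 4)) := by
  haveI : Nontrivial (EuclideanSpace ℝ (Fin d)) := nontrivial_of_ne y 0 hy
  have hynorm : 0 < ‖y‖ := norm_pos_iff.mpr hy
  set r : ℝ := ‖y‖ / 4 with hr
  have hr0 : 0 < r := by positivity
  set R : ℝ := 3 * ‖y‖ / 4 with hR
  have hR0 : 0 < R := by positivity
  set A : Set (EuclideanSpace ℝ (Fin d)) := ball ((2⁻¹ : ℝ) • y) r with hA
  have hAmeas : MeasurableSet A := measurableSet_ball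
  have hhalf : ‖(2⁻¹ : ℝ) • y‖ = ‖y‖ / 2 := by
    rw [norm_smul, Real.norm_eq_abs]
    rw [abs_of_nonneg (by norm_num : (0:ℝ) ≤ 2⁻¹)]
    ring
  have hA_lb : ∀ z ∈ A, r < ‖z‖ := by
    intro z hz
    have h1 : ‖(2⁻¹:ℝ) • y - z‖ < r := by rwa [mem_ball, dist_comm, dist_eq_norm] at hz
    have h2 := norm_sub_norm_le ((2⁻¹:ℝ) • y) z
    rw [hhalf] at h2
    have : ‖y‖ / 2 - ‖z‖ < r := lt_of_le_of_lt h2 h1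
    rw [hr] at *
    linarith
  have hA_ub : ∀ z ∈ A, ‖z‖ ≤ R := by
    intro z hz
    have h1 : ‖z - (2⁻¹:ℝ) • y‖ < r := by rwa [mem_ball, dist_eq_norm] at hz
    have h2 : ‖z‖ ≤ ‖z - (2⁻¹:ℝ) • y‖ + ‖(2⁻¹:ℝ) • y‖ := by
      have := norm_add_le (z - (2⁻¹:ℝ) • y) ((2⁻¹:ℝ) • y)
      simpa using this
    rw [hhalf] at h2
    rw [hR]; rw [hr] at h1
    linarith
  have hA_ne : ∀ z ∈ A, z ≠ 0 := by
    intro z hz h0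
    have := hA_lb z hz
    rw [h0, norm_zero] at this
    linarith
  have hA_sub : A ⊆ {z : EuclideanSpace ℝ (Fin d) | c < ‖z‖} := fun z hz =>
    lt_of_le_of_lt hc (hA_lb z hz)
  have hA_symm : ∀ z, z ∈ A ↔ y - z ∈ A := by
    intro z
    simp only [hA, mem_ball, dist_eq_norm]
    constructor <;> intro h
    · have he : y - z - (2⁻¹:ℝ) • y = -(z - (2⁻¹:ℝ) • y) := by module
      rw [he, norm_neg]; exact h
    · have he : z - (2⁻¹:ℝ) • y = -(y - z - (2⁻¹:ℝ) • y) := by module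
      rw [he, norm_neg]; exact h
  have hTmeas := Tf_measurable hφ
  -- reflection identity
  have hrefl : ∫⁻ z in A, Tf φ (y - z) ∂volume = ∫⁻ z in A, Tf φ z ∂volume := by
    rw [← lintegral_indicator hAmeas, ← lintegral_indicator hAmeas]
    have hpt : ∀ z, A.indicator (fun z => Tf φ (y - z)) z = (A.indicator (Tf φ)) (y - z) := by
      intro z
      by_cases hz : z ∈ A
      · rw [Set.indicator_of_mem hz, Set.indicator_of_mem ((hA_symm z).1 hz)]
      · rw [Set.indicator_of_notMem hz,
          Set.indicator_of_notMem (fun h => hz ((hA_symm z).2 h))]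
    calc ∫⁻ z, A.indicator (fun z => Tf φ (y - z)) z
        = ∫⁻ z, (A.indicator (Tf φ)) (y - z) := lintegral_congr hpt
      _ = ∫⁻ z, (A.indicator (Tf φ)) z :=
          (Measure.measurePreserving_sub_left volume y).lintegral_comp (hTmeas.indicator hAmeas)
  have step1 : volume A * Tf φ y ≤ 8 * ∫⁻ z in A, Tf φ z ∂volume := by
    have hsm : Measurable (fun z : EuclideanSpace ℝ (Fin d) => Tf φ z + Tf φ (y - z)) :=
      hTmeas.add (hTmeas.comp (measurable_const.sub measurable_id))
    have hbm : Measurable fun z : EuclideanSpace ℝ (Fin d) =>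
        4 * (Tf φ z + Tf φ (y - z)) := measurable_const.mul hsm
    calc volume A * Tf φ y = ∫⁻ _ in A, Tf φ y ∂volume := by
          rw [setLIntegral_const, mul_comm]
      _ ≤ ∫⁻ z in A, 4 * (Tf φ z + Tf φ (y - z)) ∂volume :=
          setLIntegral_mono hbm fun z _ => Tf_triangle hφ y z
      _ = 4 * ((∫⁻ z in A, Tf φ z ∂volume) + ∫⁻ z in A, Tf φ (y - z) ∂volume) := by
          rw [lintegral_const_mul _ hsm, lintegral_add_left hTmeas]
      _ = 8 * ∫⁻ z in A, Tf φ z ∂volume := by rw [hrefl]; ring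
  have hRd : ∀ z ∈ A, (1:ℝ≥0∞) ≤ f z * ENNReal.ofReal (R ^ d * ν R) := by
    intro z hz
    refine le_trans (hlow z (hA_ne z hz)) ?_
    refine mul_le_mul_right (ENNReal.ofReal_le_ofReal ?_) _
    have h1 : ‖z‖ ^ d ≤ R ^ d := pow_le_pow_left₀ (norm_nonneg z) (hA_ub z hz) d
    have h2 : ν ‖z‖ ≤ ν R :=
      hνmono (Set.mem_Ici.mpr (norm_nonneg z)) (Set.mem_Ici.mpr hR0.le) (hA_ub z hz)
    exact mul_le_mul h1 h2 (hν0 _) (by positivity)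
  have step2 : ∫⁻ z in A, Tf φ z ∂volume
      ≤ ENNReal.ofReal (R ^ d * ν R) * ∫⁻ z in A, f z * Tf φ z ∂volume := by
    rw [← lintegral_const_mul (f := fun z => f z * Tf φ z) _ (hf.mul hTmeas)]
    refine setLIntegral_mono (measurable_const.mul (hf.mul hTmeas)) fun z hz => ?_
    calc Tf φ z = Tf φ z * 1 := (mul_one _).symm
      _ ≤ Tf φ z * (f z * ENNReal.ofReal (R ^ d * ν R)) := mul_le_mul_right (hRd z hz) _
      _ = ENNReal.ofReal (R ^ d * ν R) * (f z * Tf φ z) := by ring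
  have step3 : ∫⁻ z in A, f z * Tf φ z ∂volume ≤ 2 * C :=
    le_trans (lintegral_mono' (Measure.restrict_mono hA_sub le_rfl) le_rfl) hen
  have hvol : volume A = ENNReal.ofReal (r ^ d)
      * volume (ball (0 : EuclideanSpace ℝ (Fin d)) 1) := by
    rw [hA, Measure.addHaar_ball _ _ hr0.le, finrank_euclideanSpace_fin]
  have hsplit : ENNReal.ofReal (R ^ d * ν R)
      = ENNReal.ofReal (r ^ d) * ENNReal.ofReal ((3:ℝ) ^ d * ν R) := by
    rw [← ENNReal.ofReal_mul (by positivity : (0:ℝ) ≤ r ^ d)]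
    congr 1
    have hRr : R = 3 * r := by rw [hR, hr]; ring
    rw [hRr, mul_pow]
    ring
  have key : (ENNReal.ofReal (r ^ d) * volume (ball (0 : EuclideanSpace ℝ (Fin d)) 1))
      * Tf φ y ≤ ENNReal.ofReal (r ^ d) * (16 * C * ENNReal.ofReal ((3:ℝ) ^ d * ν R)) := by
    rw [← hvol]
    calc volume A * Tf φ y ≤ 8 * ∫⁻ z in A, Tf φ z ∂volume := step1
      _ ≤ 8 * (ENNReal.ofReal (R ^ d * ν R) * (2 * C)) :=
          mul_le_mul_right (le_trans step2 (mul_le_mul_right step3 _)) _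
      _ = ENNReal.ofReal (r ^ d) * (16 * C * ENNReal.ofReal ((3:ℝ) ^ d * ν R)) := by
          rw [hsplit]; ring
  have ha0 : ENNReal.ofReal (r ^ d) ≠ 0 := (ENNReal.ofReal_pos.mpr (by positivity)).ne'
  have hatop : ENNReal.ofReal (r ^ d) ≠ ⊤ := ENNReal.ofReal_ne_top
  have hκ0 : volume (ball (0 : EuclideanSpace ℝ (Fin d)) 1) ≠ 0 :=
    (measure_ball_pos _ _ one_pos).ne'
  have hκtop : volume (ball (0 : EuclideanSpace ℝ (Fin d)) 1) ≠ ⊤ := measure_ball_lt_top.ne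
  have key2 : volume (ball (0 : EuclideanSpace ℝ (Fin d)) 1) * Tf φ y
      ≤ 16 * C * ENNReal.ofReal ((3:ℝ) ^ d * ν R) := by
    have h := key
    rw [mul_assoc] at h
    exact (ENNReal.mul_le_mul_iff_right ha0 hatop).mp h
  have final : Tf φ y ≤ 16 * C * ENNReal.ofReal ((3:ℝ) ^ d * ν R)
      / volume (ball (0 : EuclideanSpace ℝ (Fin d)) 1) :=
    (ENNReal.le_div_iff_mul_le (Or.inl hκ0) (Or.inl hκtop)).mpr (by rwa [mul_comm] at key2)
  refine final.trans (le_of_eq ?_)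
  rw [ENNReal.ofReal_mul (by positivity : (0:ℝ) ≤ (3:ℝ) ^ d), div_eq_mul_inv, div_eq_mul_inv]
  ring

lemma energy_bound {d : ℕ} {f : EuclideanSpace ℝ (Fin d) → ℝ≥0∞} (hf : Measurable f)
    {φ : EuclideanSpace ℝ (Fin d) → ℝ} (hφ : Measurable φ) {C : ℝ≥0∞} {c : ℝ}
    (h : ENNReal.ofReal (1/2) * ∫⁻ x, (∫⁻ z in {z : EuclideanSpace ℝ (Fin d) | c < ‖z‖},
        ENNReal.ofReal ((φ (x + z) - φ x) ^ 2) ∂(volume.withDensity f)) ∂volume ≤ C) :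
    ∫⁻ z in {z : EuclideanSpace ℝ (Fin d) | c < ‖z‖}, f z * Tf φ z ∂volume ≤ 2 * C := by
  set S : Set (EuclideanSpace ℝ (Fin d)) := {z | c < ‖z‖} with hS
  have hSmeas : MeasurableSet S := (isOpen_lt continuous_const continuous_norm).measurableSet
  have hGm : ∀ x : EuclideanSpace ℝ (Fin d),
      Measurable (fun z => ENNReal.ofReal ((φ (x + z) - φ x) ^ 2)) := fun x =>
    (((hφ.comp (measurable_const_add x)).sub measurable_const).pow_const 2).ennreal_ofReal
  have hGm' : ∀ z : EuclideanSpace ℝ (Fin d),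
      Measurable (fun x => ENNReal.ofReal ((φ (x + z) - φ x) ^ 2)) := fun z =>
    (((hφ.comp (measurable_add_const z)).sub hφ).pow_const 2).ennreal_ofReal
  have hinner : ∀ x : EuclideanSpace ℝ (Fin d),
      (∫⁻ z in S, ENNReal.ofReal ((φ (x + z) - φ x) ^ 2) ∂(volume.withDensity f))
        = ∫⁻ z in S, f z * ENNReal.ofReal ((φ (x + z) - φ x) ^ 2) ∂volume := by
    intro x
    rw [restrict_withDensity hSmeas, lintegral_withDensity_eq_lintegral_mul _ hf (hGm x)]
    rfl
  have hum : Measurable (Function.uncurry fun (x z : EuclideanSpace ℝ (Fin d)) =>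
      f z * ENNReal.ofReal ((φ (x + z) - φ x) ^ 2)) := by
    apply (hf.comp measurable_snd).mul
    exact (((hφ.comp (measurable_fst.add measurable_snd)).sub
      (hφ.comp measurable_fst)).pow_const 2).ennreal_ofReal
  have hswap : (∫⁻ x, ∫⁻ z in S, f z * ENNReal.ofReal ((φ (x + z) - φ x) ^ 2) ∂volume ∂volume)
      = ∫⁻ z in S, (∫⁻ x, f z * ENNReal.ofReal ((φ (x + z) - φ x) ^ 2) ∂volume) ∂volume :=
    lintegral_lintegral_swap hum.aemeasurable
  have hin2 : ∀ z : EuclideanSpace ℝ (Fin d),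
      (∫⁻ x, f z * ENNReal.ofReal ((φ (x + z) - φ x) ^ 2) ∂volume) = f z * Tf φ z := fun z =>
    lintegral_const_mul _ (hGm' z)
  have h' : ENNReal.ofReal (1/2) * ∫⁻ z in S, f z * Tf φ z ∂volume ≤ C := by
    calc ENNReal.ofReal (1/2) * ∫⁻ z in S, f z * Tf φ z ∂volume
        = ENNReal.ofReal (1/2) * ∫⁻ x, ∫⁻ z in S,
            ENNReal.ofReal ((φ (x + z) - φ x) ^ 2) ∂(volume.withDensity f) ∂volume := by
          congr 1
          rw [← lintegral_congr hin2, ← hswap]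
          exact (lintegral_congr hinner).symm
      _ ≤ C := h
  have h2 : (2:ℝ≥0∞) * ENNReal.ofReal (1/2) = 1 := by
    rw [show (1/2:ℝ) = (2:ℝ)⁻¹ by norm_num, ENNReal.ofReal_inv_of_pos two_pos]
    rw [ENNReal.ofReal_ofNat]
    exact ENNReal.mul_inv_cancel two_ne_zero ENNReal.ofNat_ne_top
  calc ∫⁻ z in S, f z * Tf φ z ∂volume
      = 2 * (ENNReal.ofReal (1/2) * ∫⁻ z in S, f z * Tf φ z ∂volume) := by
        rw [← mul_assoc, h2, one_mul]
    _ ≤ 2 * C := mul_le_mul_right h' 2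

/-- Equicontinuity of `L²`-translations from uniformly bounded truncated energies:
if `μ` has a density bounded below by `1/(|z|^d ν(|z|))` with `ν ≥ 0` non-decreasing
and `ν(0⁺) = 0`, and the truncated energies (over `|z| > 1/n`) of `(φ_n)` are
uniformly bounded, then `sup_n ‖φ_n(·+y) - φ_n‖_{L²} → 0` as `|y| → 0`. -/
theorem stmt13 (d : ℕ) (μ : Measure (EuclideanSpace ℝ (Fin d)))
    (hsym : μ.map (fun z => -z) = μ)
    (hμ : ∫⁻ z, ENNReal.ofReal (min (‖z‖ ^ 2) 1) ∂μ ≠ ⊤)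
    (f : EuclideanSpace ℝ (Fin d) → ℝ≥0∞) (hf : Measurable f)
    (hdens : μ = volume.withDensity f)
    (ν : ℝ → ℝ) (hν0 : ∀ r, 0 ≤ ν r) (hνmono : MonotoneOn ν (Set.Ici 0))
    (hνlim : Tendsto ν (nhdsWithin 0 (Set.Ioi 0)) (𝓝 0))
    (hlow : ∀ z : EuclideanSpace ℝ (Fin d), z ≠ 0 →
        1 ≤ f z * ENNReal.ofReal (‖z‖ ^ d * ν ‖z‖))
    (φ : ℕ → EuclideanSpace ℝ (Fin d) → ℝ)
    (hmeas : ∀ n, Measurable (φ n)) (hL2 : ∀ n, MemLp (φ n) 2 volume)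
    (C : ℝ≥0∞) (hC : C ≠ ⊤)
    (hbdd : ∀ n : ℕ,
      ENNReal.ofReal (1 / 2)
          * ∫⁻ x, (∫⁻ z in {z | ((n : ℝ) + 1)⁻¹ < ‖z‖},
              ENNReal.ofReal ((φ n (x + z) - φ n x) ^ 2) ∂μ) ∂volume ≤ C) :
    Tendsto (fun y : EuclideanSpace ℝ (Fin d) =>
        ⨆ n, eLpNorm (fun x => φ n (x + y) - φ n x) 2 volume) (𝓝 0) (𝓝 0) := by

  subst hdens
  rcases Nat.eq_zero_or_pos d with hd | hd
  · subst hd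
    haveI : Subsingleton (EuclideanSpace ℝ (Fin 0)) := ⟨fun a b => by ext i; exact i.elim0⟩
    have hz : ∀ y : EuclideanSpace ℝ (Fin 0), ∀ n : ℕ,
        (fun x => φ n (x + y) - φ n x) = fun _ => (0:ℝ) := by
      intro y n; funext x; rw [Subsingleton.elim (x + y) x]; ring
    have hfun : (fun y : EuclideanSpace ℝ (Fin 0) =>
        ⨆ n, eLpNorm (fun x => φ n (x + y) - φ n x) 2 volume) = fun _ => 0 := by
      funext y
      simp only [hz y]
      simp
    rw [hfun]
    exact tendsto_const_nhds
  -- nontriviality via a unit vector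
  have hne : ‖(EuclideanSpace.single (⟨0, hd⟩ : Fin d) (1:ℝ))‖ = 1 := by
    rw [EuclideanSpace.norm_single]; norm_num
  haveI : Nontrivial (EuclideanSpace ℝ (Fin d)) := by
    refine nontrivial_of_ne (EuclideanSpace.single (⟨0, hd⟩ : Fin d) (1:ℝ)) 0 ?_
    intro h0
    rw [h0, norm_zero] at hne
    norm_num at hne
  set e : EuclideanSpace ℝ (Fin d) := EuclideanSpace.single (⟨0, hd⟩ : Fin d) (1:ℝ) with he
  set K : ℝ≥0∞ := 16 * ENNReal.ofReal ((3:ℝ)^d) * C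
      / volume (ball (0 : EuclideanSpace ℝ (Fin d)) 1) with hKdef
  have hKtop : K ≠ ⊤ := by
    refine (ENNReal.div_lt_top ?_ ?_).ne
    · exact ENNReal.mul_ne_top (ENNReal.mul_ne_top (by norm_num) ENNReal.ofReal_ne_top) hC
    · exact (measure_ball_pos _ _ one_pos).ne'
  have hen : ∀ n : ℕ, ∫⁻ z in {z : EuclideanSpace ℝ (Fin d) | ((n:ℝ)+1)⁻¹ < ‖z‖},
      f z * Tf (φ n) z ∂volume ≤ 2 * C := fun n => energy_bound hf (hmeas n) (hbdd n)
  have hMain : ∀ n : ℕ, ∀ y : EuclideanSpace ℝ (Fin d), y ≠ 0 → ((n:ℝ)+1)⁻¹ ≤ ‖y‖/4 →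
      Tf (φ n) y ≤ K * ENNReal.ofReal (ν (3 * ‖y‖ / 4)) := fun n y hy hcc =>
    annulus_bound hf hν0 hνmono hlow (hmeas n) (hen n) hy hcc
  have hBound : ∀ n : ℕ, ∀ y : EuclideanSpace ℝ (Fin d),
      Tf (φ n) y ≤ 8 * K * ENNReal.ofReal (ν (max (10/((n:ℝ)+1)) (3 * ‖y‖ / 4))) := by
    intro n y
    have hn1 : (0:ℝ) < (n:ℝ) + 1 := by positivity
    set t : ℝ := ((n:ℝ) + 1)⁻¹ with ht
    have ht0 : 0 < t := by positivity
    have htt : 10 / ((n:ℝ)+1) = 10 * t := by rw [ht, div_eq_mul_inv]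
    have hmax0 : (0:ℝ) ≤ max (10/((n:ℝ)+1)) (3 * ‖y‖ / 4) := by
      refine le_trans ?_ (le_max_left _ _); positivity
    by_cases hcase : t ≤ ‖y‖/4
    · have hy : y ≠ 0 := by
        intro h0
        rw [h0, norm_zero] at hcase
        norm_num at hcase
        exact absurd hcase (not_le.mpr ht0)
      refine (hMain n y hy hcase).trans ?_
      have hmono : ν (3 * ‖y‖ / 4) ≤ ν (max (10/((n:ℝ)+1)) (3 * ‖y‖ / 4)) :=
        hνmono (Set.mem_Ici.mpr (by positivity)) (Set.mem_Ici.mpr hmax0) (le_max_right _ _)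
      calc K * ENNReal.ofReal (ν (3 * ‖y‖ / 4))
          ≤ K * ENNReal.ofReal (ν (max (10/((n:ℝ)+1)) (3 * ‖y‖ / 4))) :=
            mul_le_mul_right (ENNReal.ofReal_le_ofReal hmono) _
        _ ≤ 8 * K * ENNReal.ofReal (ν (max (10/((n:ℝ)+1)) (3 * ‖y‖ / 4))) := by
            refine mul_le_mul' ?_ le_rfl
            exact le_mul_of_one_le_left' (by norm_num)
    · push_neg at hcase
      have hylt : ‖y‖ < 4 * t := by linarith
      set w : EuclideanSpace ℝ (Fin d) := ((9 * t) : ℝ) • e with hw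
      have hwnorm : ‖w‖ = 9 * t := by
        rw [hw, norm_smul, hne, Real.norm_eq_abs, abs_of_pos (by positivity), mul_one]
      have hw0 : w ≠ 0 := by
        intro h0; rw [h0, norm_zero] at hwnorm; nlinarith
      have hwc : t ≤ ‖w‖ / 4 := by rw [hwnorm]; linarith
      have hyw_lb : 5 * t < ‖y - w‖ := by
        have h1 : ‖w‖ - ‖y‖ ≤ ‖w - y‖ := norm_sub_norm_le w y
        rw [norm_sub_rev] at h1
        rw [hwnorm] at h1
        linarith
      have hyw0 : y - w ≠ 0 := by
        intro h0; rw [h0, norm_zero] at hyw_lb; nlinarith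
      have hywc : t ≤ ‖y - w‖ / 4 := by linarith
      have hyw_ub : ‖y - w‖ ≤ 13 * t := by
        have h1 : ‖y - w‖ ≤ ‖y‖ + ‖w‖ := norm_sub_le y w
        rw [hwnorm] at h1
        linarith
      have hνw : ν (3 * ‖w‖ / 4) ≤ ν (max (10/((n:ℝ)+1)) (3 * ‖y‖ / 4)) := by
        refine hνmono (Set.mem_Ici.mpr (by positivity)) (Set.mem_Ici.mpr hmax0) ?_
        refine le_trans ?_ (le_max_left _ _)
        rw [hwnorm, htt]
        linarith
      have hνyw : ν (3 * ‖y - w‖ / 4) ≤ ν (max (10/((n:ℝ)+1)) (3 * ‖y‖ / 4)) := by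
        refine hνmono (Set.mem_Ici.mpr (by positivity)) (Set.mem_Ici.mpr hmax0) ?_
        refine le_trans ?_ (le_max_left _ _)
        rw [htt]
        linarith
      calc Tf (φ n) y ≤ 4 * (Tf (φ n) w + Tf (φ n) (y - w)) := Tf_triangle (hmeas n) y w
        _ ≤ 4 * (K * ENNReal.ofReal (ν (max (10/((n:ℝ)+1)) (3 * ‖y‖ / 4)))
              + K * ENNReal.ofReal (ν (max (10/((n:ℝ)+1)) (3 * ‖y‖ / 4)))) := by
            refine mul_le_mul_right (add_le_add ?_ ?_) _
            · exact (hMain n w hw0 hwc).trans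
                (mul_le_mul_right (ENNReal.ofReal_le_ofReal hνw) _)
            · exact (hMain n (y - w) hyw0 hywc).trans
                (mul_le_mul_right (ENNReal.ofReal_le_ofReal hνyw) _)
        _ = 8 * K * ENNReal.ofReal (ν (max (10/((n:ℝ)+1)) (3 * ‖y‖ / 4))) := by ring
  -- final epsilon-delta argument
  rw [ENNReal.tendsto_nhds_zero]
  intro ε hε
  set ε' : ℝ≥0∞ := min ε 1 with hε'def
  have hε'0 : 0 < ε' := lt_min hε one_pos
  have hε'top : ε' ≠ ⊤ := ((min_le_right ε 1).trans_lt (by norm_num)).ne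
  set δ2 : ℝ≥0∞ := ε' ^ (2:ℝ) with hδ2
  have hδ20 : 0 < δ2 := ENNReal.rpow_pos hε'0 hε'top
  have hδ2top : δ2 ≠ ⊤ := ENNReal.rpow_ne_top_of_nonneg (by norm_num) hε'top
  obtain ⟨η, hη0, hη⟩ : ∃ η : ℝ, 0 < η ∧ 8 * K * ENNReal.ofReal η ≤ δ2 := by
    by_cases hK0 : K = 0
    · exact ⟨1, one_pos, by simp [hK0]⟩
    · have h8K0 : (8:ℝ≥0∞) * K ≠ 0 := by
        simp only [ne_eq, mul_eq_zero, not_or]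
        exact ⟨by norm_num, hK0⟩
      have h8Ktop : (8:ℝ≥0∞) * K ≠ ⊤ := ENNReal.mul_ne_top (by norm_num) hKtop
      have hdivtop : δ2 / (8 * K) ≠ ⊤ := (ENNReal.div_lt_top hδ2top h8K0).ne
      refine ⟨(δ2 / (8 * K)).toReal, ?_, ?_⟩
      · exact ENNReal.toReal_pos (ENNReal.div_pos hδ20.ne' h8Ktop).ne' hdivtop
      · rw [ENNReal.ofReal_toReal hdivtop, ENNReal.mul_div_cancel' (fun h => absurd h h8K0) (fun h => absurd h h8Ktop)]
  have hev : ∀ᶠ rr in nhdsWithin (0:ℝ) (Set.Ioi 0), ν rr < η :=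
    hνlim.eventually (gt_mem_nhds hη0)
  rw [eventually_nhdsWithin_iff, Metric.eventually_nhds_iff] at hev
  obtain ⟨ρ, hρ0, hρ⟩ := hev
  obtain ⟨N, hN⟩ := exists_nat_gt (10 / ρ)
  have hNn : ∀ n : ℕ, N ≤ n → 10/((n:ℝ)+1) < ρ := by
    intro n hn
    have hcast : (N:ℝ) ≤ (n:ℝ) := Nat.cast_le.mpr hn
    have h1 : (10:ℝ)/ρ < (n:ℝ) + 1 := by linarith
    rw [div_lt_iff₀ hρ0] at h1
    rw [div_lt_iff₀ (by positivity : (0:ℝ) < (n:ℝ)+1)]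
    linarith
  have hsmall : ∀ n : ℕ, ∀ᶠ y : EuclideanSpace ℝ (Fin d) in 𝓝 0,
      eLpNorm (fun x => φ n (x + y) - φ n x) 2 volume ≤ ε' := fun n =>
    (ENNReal.tendsto_nhds_zero.mp (tendsto_translate (φ n) (hL2 n))) ε' hε'0
  have hsmallN : ∀ᶠ y : EuclideanSpace ℝ (Fin d) in 𝓝 0, ∀ n, n < N →
      eLpNorm (fun x => φ n (x + y) - φ n x) 2 volume ≤ ε' := by
    have hall := (Finset.range N).eventually_all.mpr (fun n _ => hsmall n)
    filter_upwards [hall] with y hy n hn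
    exact hy n (Finset.mem_range.mpr hn)
  have hnormev : ∀ᶠ y : EuclideanSpace ℝ (Fin d) in 𝓝 0, ‖y‖ < ρ := by
    filter_upwards [Metric.ball_mem_nhds (0 : EuclideanSpace ℝ (Fin d)) hρ0] with y hy
    simpa [dist_zero_right] using hy
  filter_upwards [hsmallN, hnormev] with y h1 h2
  refine iSup_le fun n => ?_
  rcases lt_or_ge n N with hn | hn
  · exact (h1 n hn).trans (min_le_left _ _)
  · have hM0 : (0:ℝ) < 10/((n:ℝ)+1) := by positivity
    have hMpos : 0 < max (10/((n:ℝ)+1)) (3 * ‖y‖ / 4) := lt_of_lt_of_le hM0 (le_max_left _ _)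
    have hMρ : max (10/((n:ℝ)+1)) (3 * ‖y‖ / 4) < ρ := by
      apply max_lt (hNn n hn)
      have hyn : (0:ℝ) ≤ ‖y‖ := norm_nonneg y
      linarith
    have hνM : ν (max (10/((n:ℝ)+1)) (3 * ‖y‖ / 4)) < η := by
      refine hρ ?_ (Set.mem_Ioi.mpr hMpos)
      rw [Real.dist_eq, sub_zero, abs_of_pos hMpos]
      exact hMρ
    have hT : Tf (φ n) y ≤ δ2 := by
      refine (hBound n y).trans ?_
      exact le_trans (mul_le_mul_right (ENNReal.ofReal_le_ofReal hνM.le) _) hη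
    have heq : eLpNorm (fun x => φ n (x + y) - φ n x) 2 volume = Tf (φ n) y ^ (1/2:ℝ) :=
      eLpNorm_sq _ _
    rw [heq]
    calc Tf (φ n) y ^ (1/2:ℝ) ≤ δ2 ^ (1/2:ℝ) := ENNReal.rpow_le_rpow hT (by norm_num)
      _ = ε' := by rw [hδ2, ← ENNReal.rpow_mul]; norm_num
      _ ≤ ε := min_le_left _ _
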